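/- Suppose (W,S) is a Coxeter system of type Λ and let α and β be two braid equivalent reduced expressions of dimension at least one. A braid sequence b_1^{j_1}, b_2^{j_2}, …, b_k^{j_k} from α to β is minimal if and only if each index j_i appears exactly once in the sequence (i.e., j_1, …, j_k are pairwise distinct). -/

import Mathlib

open scoped Classical

namespace Braid

variable {B : Type*}

/-- A Coxeter matrix is *simply laced* if all of its entries are 1, 2 or 3
(in particular, no entry is `0`, which encodes `m(s,t) = ∞`). -/
def SimplyLaced (M : CoxeterMatrix B) : Prop := ∀ s t : B, 1 ≤ M s t ∧ M s t ≤ 3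

/-- The Coxeter graph has an edge between `s` and `t` iff `m(s,t) ≥ 3`
(where the entry `0` encodes `∞`). -/
def CoxEdge (M : CoxeterMatrix B) (s t : B) : Prop := M s t = 0 ∨ 3 ≤ M s t

/-- A Coxeter matrix is *triangle free* if its Coxeter graph contains no three-cycles. -/
def TriangleFree (M : CoxeterMatrix B) : Prop :=
  ∀ s t u : B, ¬ (CoxEdge M s t ∧ CoxEdge M t u ∧ CoxEdge M s u)

/-- A Coxeter system is of *type Λ* if it is simply laced and triangle free. -/
def TypeLambda (M : CoxeterMatrix B) : Prop := SimplyLaced M ∧ TriangleFree M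

/-- `y` is obtained from `x` by replacing the factor `s t s` occupying the (0-based)
positions `p, p+1, p+2` by `t s t`, where `m(s,t) = 3`. -/
def BraidMoveAt (M : CoxeterMatrix B) (x y : List B) (p : ℕ) : Prop :=
  ∃ s t : B, M s t = 3 ∧
    x = x.take p ++ [s, t, s] ++ x.drop (p + 3) ∧
    y = x.take p ++ [t, s, t] ++ x.drop (p + 3)

/-- `x` and `y` differ by a single braid move (applied to `x`). -/
def BraidMove (M : CoxeterMatrix B) (x y : List B) : Prop := ∃ p, BraidMoveAt M x y p

/-- Two words are *braid equivalent* if one is obtained from the other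
by a sequence of braid moves. -/
def BraidEquiv (M : CoxeterMatrix B) : List B → List B → Prop :=
  Relation.ReflTransGen (BraidMove M)

/-- The braid class of `α`. -/
def braidClass (M : CoxeterMatrix B) (α : List B) : Set (List B) := {x | BraidEquiv M α x}

/-- The braid graph of `α`: vertices are the members of the braid class of `α`, with two
vertices adjacent iff they differ by a single braid move. -/
def braidGraph (M : CoxeterMatrix B) (α : List B) : SimpleGraph (braidClass M α) :=
  SimpleGraph.fromRel (fun x y => BraidMove M x.1 y.1)

/-- `c` is the (1-based) center of a braid shadow of `β`; that is, the interval of 1-based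
positions `⟦c-1, c+1⟧` is a braid shadow of `β`. -/
def ShadowCenter (M : CoxeterMatrix B) (β : List B) (c : ℕ) : Prop :=
  2 ≤ c ∧ ∃ s t : B, M s t = 3 ∧ β = β.take (c - 2) ++ [s, t, s] ++ β.drop (c + 1)

/-- The set of (1-based) centers of the braid shadows of the braid class `[α]`. -/
def classCenters (M : CoxeterMatrix B) (α : List B) : Set ℕ :=
  {c | ∃ β ∈ braidClass M α, ShadowCenter M β c}

/-- The dimension of `α`: the number of braid shadows of `[α]`. -/
noncomputable def braidDim (M : CoxeterMatrix B) (α : List B) : ℕ :=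
  (classCenters M α).ncard

/-- The (1-based) center of the `i`-th braid shadow of `[α]`, the braid shadows being
numbered `1, …, braidDim M α` from left to right. -/
noncomputable def nthCenter (M : CoxeterMatrix B) (α : List B) (i : ℕ) : ℕ :=
  Nat.nth (· ∈ classCenters M α) (i - 1)

/-- The `i`-th entry of the signature of `x ∈ [α]`: the letter of `x` appearing in the
center of the `i`-th braid shadow of `[α]`. -/
noncomputable def sig (M : CoxeterMatrix B) (α x : List B) (i : ℕ) : Option B :=
  x[nthCenter M α i - 1]?

/-- `sigbar M α x i` is the set of members of `[α]` whose signature agrees with that of `x`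
in position `i`. -/
noncomputable def sigbar (M : CoxeterMatrix B) (α x : List B) (i : ℕ) :
    Set (braidClass M α) :=
  {y | sig M α y.1 i = sig M α x i}

/-- `x` and `y` differ by a single braid move occurring in the `j`-th braid shadow
of `[α]` (i.e. the edge `{x,y}` of the braid graph is labeled by `j`). -/
noncomputable def EdgeLabeled (M : CoxeterMatrix B) (α x y : List B) (j : ℕ) : Prop :=
  1 ≤ j ∧ j ≤ braidDim M α ∧
    (BraidMoveAt M x y (nthCenter M α j - 2) ∨ BraidMoveAt M y x (nthCenter M α j - 2))

/-- `x` and `y` differ by a single braid move occurring in the braid shadow with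
(1-based) center `c`. -/
def MoveAtCenter (M : CoxeterMatrix B) (x y : List B) (c : ℕ) : Prop :=
  BraidMoveAt M x y (c - 2) ∨ BraidMoveAt M y x (c - 2)

/-- `BraidSeq M α js x y` : the list `js` of braid-shadow numbers records a braid sequence
transforming `x` into `y`, each move being applied in the indicated braid shadow of `[α]`. -/
noncomputable def BraidSeq (M : CoxeterMatrix B) (α : List B) :
    List ℕ → List B → List B → Prop
  | [], x, y => x = y
  | j :: js, x, y => ∃ z, EdgeLabeled M α x z j ∧ BraidSeq M α js z y

/-- A braid sequence from `x` to `y` is *minimal* if no shorter braid sequence from `x`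
to `y` exists. -/
noncomputable def MinimalBraidSeq (M : CoxeterMatrix B) (α : List B)
    (js : List ℕ) (x y : List B) : Prop :=
  BraidSeq M α js x y ∧ ∀ ls : List ℕ, BraidSeq M α ls x y → js.length ≤ ls.length

/-- `Δ(sig(α), sig(β))`: the number of positions at which the signatures of `α` and `β`
differ. -/
noncomputable def sigDelta (M : CoxeterMatrix B) (α β : List B) : ℕ :=
  {i | 1 ≤ i ∧ i ≤ braidDim M α ∧ sig M α α i ≠ sig M α β i}.ncard

/-- A reduced expression is a *link* if it has length 1, or it has odd length `m` and the
braid shadows of its braid class are exactly `⟦1,3⟧, ⟦3,5⟧, …, ⟦m-2,m⟧`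
(equivalently, the shadow centers are exactly the even numbers `2, 4, …, m-1`). -/
def IsLink (M : CoxeterMatrix B) (α : List B) : Prop :=
  1 ≤ α.length ∧
    (α.length = 1 ∨ (Odd α.length ∧
      classCenters M α = {c | Even c ∧ 2 ≤ c ∧ c + 1 ≤ α.length}))

/-- `maj M α β γ i`: the majority among the `i`-th signature entries of `α`, `β`, `γ`. -/
noncomputable def maj (M : CoxeterMatrix B) (α β γ : List B) (i : ℕ) : Option B :=
  if sig M α α i = sig M α β i ∨ sig M α α i = sig M α γ i then sig M α α i
  else sig M α β i

/-- `sigbarPair M α x y`: the set of members of `[α]` whose signature agrees with the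
common signature entries of `x` and `y`. -/
noncomputable def sigbarPair (M : CoxeterMatrix B) (α x y : List B) :
    Set (braidClass M α) :=
  {z | ∀ i : ℕ, 1 ≤ i → i ≤ braidDim M α →
    sig M α x i = sig M α y i → sig M α z.1 i = sig M α x i}

/-! ### Graph-theoretic notions -/

/-- A set `U` of vertices of a graph is *convex* if every vertex on every geodesic
(shortest path) between two vertices of `U` belongs to `U`. -/
def GraphConvex {V : Type*} (G : SimpleGraph V) (U : Set V) : Prop :=
  ∀ u ∈ U, ∀ v ∈ U, ∀ p : G.Walk u v, p.length = G.dist u v → ∀ x ∈ p.support, x ∈ U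

/-- The interval `I(u,v)`: the set of vertices lying on some geodesic between `u` and `v`. -/
def interval {V : Type*} (G : SimpleGraph V) (u v : V) : Set V :=
  {x | ∃ p : G.Walk u v, p.length = G.dist u v ∧ x ∈ p.support}

/-- A connected graph is *median* if any three vertices admit a unique median. -/
def IsMedianGraph {V : Type*} (G : SimpleGraph V) : Prop :=
  G.Connected ∧ ∀ u v w : V,
    ∃! x, x ∈ interval G u v ∩ interval G u w ∩ interval G v w

/-- The hypercube of dimension `n`: vertices are binary strings of length `n`, adjacent
iff they differ in exactly one digit. -/
def hypercube (n : ℕ) : SimpleGraph (Fin n → Bool) :=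
  SimpleGraph.fromRel (fun x y => ∃! i, x i ≠ y i)

/-- A graph is a *partial cube* if it admits an isometric embedding into some hypercube. -/
def IsPartialCube {V : Type*} (G : SimpleGraph V) : Prop :=
  ∃ (n : ℕ) (f : V → Fin n → Bool),
    ∀ u v : V, (hypercube n).dist (f u) (f v) = G.dist u v

/-- The isometric dimension of a graph: the minimal dimension of a hypercube into which it
isometrically embeds. -/
noncomputable def isoDim {V : Type*} (G : SimpleGraph V) : ℕ :=
  sInf {n | ∃ f : V → Fin n → Bool,
    ∀ u v : V, (hypercube n).dist (f u) (f v) = G.dist u v}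

/-- The semicube `W_{uv}` : the set of vertices strictly closer to `u` than to `v`. -/
def semicube {V : Type*} (G : SimpleGraph V) (u v : V) : Set V :=
  {w | G.dist w u < G.dist w v}

/-! ### Auxiliary lemmas: braid move basics -/

section AuxMoves

variable {M : CoxeterMatrix B}

private lemma win_getElem? (A D : List B) (a b c : B) (i : ℕ) :
    (A ++ [a, b, c] ++ D)[i]? =
      if i < A.length then A[i]?
      else if i = A.length then some a
      else if i = A.length + 1 then some b
      else if i = A.length + 2 then some c
      else D[i - (A.length + 3)]? := by
  rcases lt_or_ge i A.length with h | h
  · rw [List.getElem?_append_left (by simpa using by omega : i < (A ++ [a,b,c]).length),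
      List.getElem?_append_left h, if_pos h]
  · rcases lt_or_ge i (A.length + 3) with h2 | h2
    · rw [List.getElem?_append_left (by simp; omega),
        List.getElem?_append_right h]
      have h0 : i - A.length = 0 ∨ i - A.length = 1 ∨ i - A.length = 2 := by omega
      rw [if_neg (by omega)]
      rcases h0 with h0 | h0 | h0
      · rw [h0, if_pos (by omega)]; rfl
      · rw [h0, if_neg (by omega), if_pos (by omega)]; rfl
      · rw [h0, if_neg (by omega), if_neg (by omega), if_pos (by omega)]; rfl
    · rw [List.getElem?_append_right (by simp; omega)]
      simp only [List.length_append, List.length_cons, List.length_nil]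
      rw [if_neg (by omega), if_neg (by omega), if_neg (by omega), if_neg (by omega)]

lemma BraidMoveAt.facts {x y : List B} {p : ℕ} (h : BraidMoveAt M x y p) :
    ∃ s t : B, M s t = 3 ∧
      x = x.take p ++ [s, t, s] ++ x.drop (p + 3) ∧
      y = x.take p ++ [t, s, t] ++ x.drop (p + 3) ∧
      p + 3 ≤ x.length ∧ y.length = x.length ∧
      x[p]? = some s ∧ x[p+1]? = some t ∧ x[p+2]? = some s ∧
      y[p]? = some t ∧ y[p+1]? = some s ∧ y[p+2]? = some t ∧
      (∀ i, i ≠ p → i ≠ p+1 → i ≠ p+2 → y[i]? = x[i]?) := by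
  obtain ⟨s, t, h3, hx, hy⟩ := h
  have hlx := congrArg List.length hx
  simp only [List.length_append, List.length_take, List.length_drop, List.length_cons,
    List.length_nil] at hlx
  have hp : p + 3 ≤ x.length := by omega
  have hA : (x.take p).length = p := by simp; omega
  have hly := congrArg List.length hy
  simp only [List.length_append, List.length_take, List.length_drop, List.length_cons,
    List.length_nil] at hly
  refine ⟨s, t, h3, hx, hy, hp, by omega, ?_, ?_, ?_, ?_, ?_, ?_, ?_⟩
  · conv_lhs => rw [hx]
    rw [win_getElem?, hA]; simp
  · conv_lhs => rw [hx]
    rw [win_getElem?, hA]; rw [if_neg (by omega), if_neg (by omega), if_pos rfl]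
  · conv_lhs => rw [hx]
    rw [win_getElem?, hA]
    rw [if_neg (by omega), if_neg (by omega), if_neg (by omega), if_pos rfl]
  · rw [hy, win_getElem?, hA]; simp
  · rw [hy, win_getElem?, hA]; rw [if_neg (by omega), if_neg (by omega), if_pos rfl]
  · rw [hy, win_getElem?, hA]
    rw [if_neg (by omega), if_neg (by omega), if_neg (by omega), if_pos rfl]
  · intro i h0 h1 h2
    rw [hy, win_getElem?, hA]
    conv_rhs => rw [hx]
    rw [win_getElem?, hA]
    rcases lt_or_ge i p with hlt | hge
    · rw [if_pos hlt, if_pos hlt]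
    · rw [if_neg (by omega), if_neg (by omega), if_neg (by omega), if_neg (by omega),
        if_neg (by omega), if_neg (by omega), if_neg (by omega), if_neg (by omega)]

lemma braidMoveAt_of_facts {x y : List B} {p : ℕ} {s t : B} (h3 : M s t = 3)
    (hlen : y.length = x.length)
    (hx0 : x[p]? = some s) (hx1 : x[p+1]? = some t) (hx2 : x[p+2]? = some s)
    (hy0 : y[p]? = some t) (hy1 : y[p+1]? = some s) (hy2 : y[p+2]? = some t)
    (hoff : ∀ i, i ≠ p → i ≠ p+1 → i ≠ p+2 → y[i]? = x[i]?) :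
    BraidMoveAt M x y p := by
  have hp : p + 2 < x.length := by
    by_contra hc
    rw [List.getElem?_eq_none (by omega)] at hx2
    exact absurd hx2 (by simp)
  have hA : (x.take p).length = p := by simp; omega
  refine ⟨s, t, h3, ?_, ?_⟩
  · apply List.ext_getElem?
    intro i
    rw [win_getElem?, hA]
    rcases lt_or_ge i p with hlt | hge
    · rw [if_pos hlt, List.getElem?_take_of_lt hlt]
    · rw [if_neg (by omega)]
      rcases Nat.lt_or_ge i (p+3) with h2 | h2
      · have : i = p ∨ i = p + 1 ∨ i = p + 2 := by omega
        rcases this with rfl | rfl | rfl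
        · rw [if_pos rfl]; exact hx0
        · rw [if_neg (by omega), if_pos rfl]; exact hx1
        · rw [if_neg (by omega), if_neg (by omega), if_pos rfl]; exact hx2
      · rw [if_neg (by omega), if_neg (by omega), if_neg (by omega), List.getElem?_drop]
        congr 1
        omega
  · apply List.ext_getElem?
    intro i
    rw [win_getElem?, hA]
    rcases lt_or_ge i p with hlt | hge
    · rw [if_pos hlt, List.getElem?_take_of_lt hlt]
      exact hoff i (by omega) (by omega) (by omega)
    · rw [if_neg (by omega)]
      rcases Nat.lt_or_ge i (p+3) with h2 | h2
      · have : i = p ∨ i = p + 1 ∨ i = p + 2 := by omega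
        rcases this with rfl | rfl | rfl
        · rw [if_pos rfl]; exact hy0
        · rw [if_neg (by omega), if_pos rfl]; exact hy1
        · rw [if_neg (by omega), if_neg (by omega), if_pos rfl]; exact hy2
      · rw [if_neg (by omega), if_neg (by omega), if_neg (by omega), List.getElem?_drop,
          (by omega : p + 3 + (i - (p+3)) = i)]
        exact hoff i (by omega) (by omega) (by omega)

lemma BraidMoveAt.symm {x y : List B} {p : ℕ} (h : BraidMoveAt M x y p) :
    BraidMoveAt M y x p := by
  obtain ⟨s, t, h3, -, -, _, hlen, hx0, hx1, hx2, hy0, hy1, hy2, hoff⟩ := h.facts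
  exact braidMoveAt_of_facts (M.symmetric s t ▸ h3) hlen.symm hy0 hy1 hy2 hx0 hx1 hx2
    (fun i a b c => (hoff i a b c).symm)

lemma BraidMoveAt.unique {x y y' : List B} {p : ℕ} (h : BraidMoveAt M x y p)
    (h' : BraidMoveAt M x y' p) : y = y' := by
  obtain ⟨s, t, h3, -, -, hp, hlen, hx0, hx1, hx2, hy0, hy1, hy2, hoff⟩ := h.facts
  obtain ⟨s', t', h3', -, -, hp', hlen', hx0', hx1', hx2', hy0', hy1', hy2', hoff'⟩ := h'.facts
  have hs : s = s' := by rw [hx0] at hx0'; exact Option.some_injective _ hx0'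
  have ht : t = t' := by rw [hx1] at hx1'; exact Option.some_injective _ hx1'
  subst hs ht
  apply List.ext_getElem?
  intro i
  by_cases h0 : i = p
  · subst h0; rw [hy0, hy0']
  · by_cases h1 : i = p + 1
    · subst h1; rw [hy1, hy1']
    · by_cases h2 : i = p + 2
      · subst h2; rw [hy2, hy2']
      · rw [hoff i h0 h1 h2, hoff' i h0 h1 h2]

end AuxMoves
section AuxWin

variable {M : CoxeterMatrix B}

private lemma win_at0 {A : List B} {p : ℕ} (D : List B) (a b c : B) (hA : A.length = p) :
    (A ++ [a, b, c] ++ D)[p]? = some a := by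
  rw [win_getElem?, hA, if_neg (by omega), if_pos rfl]

private lemma win_at1 {A : List B} {p : ℕ} (D : List B) (a b c : B) (hA : A.length = p) :
    (A ++ [a, b, c] ++ D)[p+1]? = some b := by
  rw [win_getElem?, hA, if_neg (by omega), if_neg (by omega), if_pos rfl]

private lemma win_at2 {A : List B} {p : ℕ} (D : List B) (a b c : B) (hA : A.length = p) :
    (A ++ [a, b, c] ++ D)[p+2]? = some c := by
  rw [win_getElem?, hA, if_neg (by omega), if_neg (by omega), if_neg (by omega), if_pos rfl]

/-- Construct a braid move from a window. -/
lemma braidMoveAt_construct {x : List B} {c' : ℕ} {s t : B} (h3 : M s t = 3)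
    (h0 : x[c']? = some s) (h1 : x[c'+1]? = some t) (h2 : x[c'+2]? = some s) :
    BraidMoveAt M x (x.take c' ++ [t, s, t] ++ x.drop (c'+3)) c' := by
  have hlen : c' + 2 < x.length := by
    by_contra hc
    rw [List.getElem?_eq_none (by omega)] at h2
    exact absurd h2 (by simp)
  have hA : (x.take c').length = c' := by simp; omega
  have hyl : (x.take c' ++ [t, s, t] ++ x.drop (c'+3)).length = x.length := by
    simp; omega
  apply braidMoveAt_of_facts h3 hyl h0 h1 h2
  · exact win_at0 _ _ _ _ hA
  · exact win_at1 _ _ _ _ hA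
  · exact win_at2 _ _ _ _ hA
  · intro i hi0 hi1 hi2
    rw [win_getElem?, hA]
    rcases lt_or_ge i c' with hlt | hge
    · rw [if_pos hlt, List.getElem?_take_of_lt hlt]
    · rw [if_neg (by omega), if_neg (by omega), if_neg (by omega), if_neg (by omega),
        List.getElem?_drop, (by omega : c' + 3 + (i - (c'+3)) = i)]

end AuxWin

section AuxGroup

variable {W : Type*} [Group W]

private lemma braid_ab {a b : W} (ha : a * a = 1) (hb : b * b = 1)
    (h : (a * b) ^ 3 = 1) : a * b * a * b = b * a := by
  have haa : ∀ x : W, a * (a * x) = x := fun x => by rw [← mul_assoc, ha, one_mul]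
  have hbb : ∀ x : W, b * (b * x) = x := fun x => by rw [← mul_assoc, hb, one_mul]
  have hexp : a * (b * (a * (b * (a * b)))) = 1 := by
    have h' := h
    rw [pow_succ, pow_succ, pow_one] at h'
    calc a * (b * (a * (b * (a * b)))) = (a * b) * (a * b) * (a * b) := by
          simp [mul_assoc]
    _ = 1 := h'
  have e : b * (a * (a * (b * (a * (b * (a * b)))))) = b * a := by rw [hexp, mul_one]
  rw [← e]
  simp [mul_assoc, haa, hbb]

private lemma braid_five {a b : W} (ha : a * a = 1) (hb : b * b = 1)
    (h : (a * b) ^ 3 = 1) : a * b * a * b * a = b := by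
  calc a * b * a * b * a = (b * a) * a := by rw [braid_ab ha hb h]
  _ = b := by rw [mul_assoc, ha, mul_one]

private lemma braid_sts {a b : W} (ha : a * a = 1) (hb : b * b = 1)
    (h : (a * b) ^ 3 = 1) : a * b * a = b * a * b := by
  calc a * b * a = a * b * a * (b * b) := by rw [hb, mul_one]
  _ = (a * b * a * b) * b := by simp [mul_assoc]
  _ = (b * a) * b := by rw [braid_ab ha hb h]

private lemma braid_dih {a b : W} (ha : a * a = 1) (hb : b * b = 1)
    (h : (a * b) ^ 3 = 1) : (a * b * a) * b * (a * b * a) = a := by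
  calc (a * b * a) * b * (a * b * a) = (a * b * a * b * a) * (b * a) := by simp [mul_assoc]
  _ = b * (b * a) := by rw [braid_five ha hb h]
  _ = a := by rw [← mul_assoc, hb, one_mul]

end AuxGroup

section AuxCox

variable {W : Type*} [Group W] {M : CoxeterMatrix B} (cs : CoxeterSystem M W)

lemma simple_pow3 {s t : B} (h3 : M s t = 3) :
    (cs.simple s * cs.simple t) ^ 3 = 1 := by
  rw [← h3]; exact cs.simple_mul_simple_pow s t

lemma simple_braid {s t : B} (h3 : M s t = 3) :
    cs.simple s * cs.simple t * cs.simple s = cs.simple t * cs.simple s * cs.simple t :=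
  braid_sts (cs.simple_mul_simple_self s) (cs.simple_mul_simple_self t) (simple_pow3 cs h3)

lemma wordProd_sts {s t : B} (h3 : M s t = 3) :
    cs.wordProd [s, t, s] = cs.wordProd [t, s, t] := by
  simp only [CoxeterSystem.wordProd_cons, CoxeterSystem.wordProd_nil, mul_one, ← mul_assoc]
  exact simple_braid cs h3

lemma BraidMoveAt.wordProd_eq {x y : List B} {p : ℕ} (h : BraidMoveAt M x y p) :
    cs.wordProd y = cs.wordProd x := by
  obtain ⟨s, t, h3, hx, hy⟩ := h
  rw [hy]
  conv_rhs => rw [hx]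
  rw [CoxeterSystem.wordProd_append, CoxeterSystem.wordProd_append,
    CoxeterSystem.wordProd_append, CoxeterSystem.wordProd_append, wordProd_sts cs h3]

lemma BraidMoveAt.length_eq {x y : List B} {p : ℕ} (h : BraidMoveAt M x y p) :
    y.length = x.length := by
  obtain ⟨-, -, -, -, -, -, hl, -⟩ := h.facts
  exact hl

lemma BraidMoveAt.isReduced {x y : List B} {p : ℕ} (h : BraidMoveAt M x y p)
    (hx : cs.IsReduced x) : cs.IsReduced y := by
  unfold CoxeterSystem.IsReduced at *
  rw [h.wordProd_eq cs, h.length_eq, hx]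

end AuxCox

section AuxSeq

variable {M : CoxeterMatrix B}

/-- A chain of braid moves, recorded by the (1-based) centers of the moves. -/
def SeqC (M : CoxeterMatrix B) : List ℕ → List B → List B → Prop
  | [], x, y => x = y
  | c :: cl, x, y => ∃ z, 2 ≤ c ∧ BraidMoveAt M x z (c - 2) ∧ SeqC M cl z y

@[simp] lemma seqC_nil {x y : List B} : SeqC M [] x y ↔ x = y := Iff.rfl

@[simp] lemma seqC_cons {c : ℕ} {cl : List ℕ} {x y : List B} :
    SeqC M (c :: cl) x y ↔ ∃ z, 2 ≤ c ∧ BraidMoveAt M x z (c - 2) ∧ SeqC M cl z y := Iff.rfl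

lemma seqC_append {l₁ l₂ : List ℕ} {x y : List B} :
    SeqC M (l₁ ++ l₂) x y ↔ ∃ z, SeqC M l₁ x z ∧ SeqC M l₂ z y := by
  induction l₁ generalizing x with
  | nil => simp
  | cons c cl ih =>
    simp only [List.cons_append, seqC_cons, ih]
    constructor
    · rintro ⟨z, hc, mv, w, h1, h2⟩
      exact ⟨w, ⟨z, hc, mv, h1⟩, h2⟩
    · rintro ⟨w, ⟨z, hc, mv, h1⟩, h2⟩
      exact ⟨z, hc, mv, w, h1, h2⟩

lemma SeqC.reverse {cl : List ℕ} {x y : List B} (h : SeqC M cl x y) :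
    SeqC M cl.reverse y x := by
  induction cl generalizing x with
  | nil => exact h.symm
  | cons c cl ih =>
    obtain ⟨z, hc, mv, rest⟩ := h
    rw [List.reverse_cons]
    exact seqC_append.mpr ⟨z, ih rest, x, hc, mv.symm, rfl⟩

lemma SeqC.length_eq {cl : List ℕ} {x y : List B} (h : SeqC M cl x y) :
    y.length = x.length := by
  induction cl generalizing x with
  | nil => rw [h]
  | cons c cl ih =>
    obtain ⟨z, _, mv, rest⟩ := h
    rw [ih rest, mv.length_eq]

lemma SeqC.isReduced {W : Type*} [Group W] (cs : CoxeterSystem M W) {cl : List ℕ}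
    {x y : List B} (h : SeqC M cl x y) (hx : cs.IsReduced x) : cs.IsReduced y := by
  induction cl generalizing x with
  | nil => rwa [← h]
  | cons c cl ih =>
    obtain ⟨z, _, mv, rest⟩ := h
    exact ih rest (mv.isReduced cs hx)

lemma braidEquiv_iff_seqC {x y : List B} : BraidEquiv M x y ↔ ∃ cl, SeqC M cl x y := by
  constructor
  · intro h
    induction h with
    | refl => exact ⟨[], rfl⟩
    | tail hstep hmv ih =>
      obtain ⟨cl, hcl⟩ := ih
      obtain ⟨p, mv⟩ := hmv
      refine ⟨cl ++ [p + 2], seqC_append.mpr ⟨_, hcl, ?_⟩⟩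
      exact ⟨_, by omega, by rwa [(by omega : p + 2 - 2 = p)], rfl⟩
  · rintro ⟨cl, hcl⟩
    induction cl generalizing x with
    | nil =>
      cases seqC_nil.mp hcl
      exact Relation.ReflTransGen.refl
    | cons c cl ih =>
      obtain ⟨z, hc, mv, rest⟩ := hcl
      exact Relation.ReflTransGen.head ⟨c - 2, mv⟩ (ih rest)

end AuxSeq

section AuxShadow

variable {M : CoxeterMatrix B}

lemma shadowCenter_iff {β : List B} {c : ℕ} :
    ShadowCenter M β c ↔ 2 ≤ c ∧ ∃ y, BraidMoveAt M β y (c - 2) := by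
  constructor
  · rintro ⟨hc, s, t, h3, hform⟩
    refine ⟨hc, β.take (c-2) ++ [t, s, t] ++ β.drop (c+1), s, t, h3, ?_, ?_⟩
    · rwa [(by omega : c - 2 + 3 = c + 1)]
    · rw [(by omega : c - 2 + 3 = c + 1)]
  · rintro ⟨hc, y, s, t, h3, hform, -⟩
    exact ⟨hc, s, t, h3, by rwa [(by omega : c - 2 + 3 = c + 1)] at hform⟩

lemma shadowCenter_of_move {x y : List B} {p : ℕ} (h : BraidMoveAt M x y p) :
    ShadowCenter M x (p+2) ∧ ShadowCenter M y (p+2) := by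
  constructor
  · exact shadowCenter_iff.mpr ⟨by omega, y, by rwa [(by omega : p + 2 - 2 = p)]⟩
  · exact shadowCenter_iff.mpr ⟨by omega, x, by rw [(by omega : p + 2 - 2 = p)]; exact h.symm⟩

lemma shadowCenter_window {β : List B} {c' : ℕ} :
    ShadowCenter M β (c'+2) ↔
      ∃ s t, M s t = 3 ∧ β[c']? = some s ∧ β[c'+1]? = some t ∧ β[c'+2]? = some s := by
  rw [shadowCenter_iff]
  constructor
  · rintro ⟨-, y, h⟩
    rw [(by omega : c' + 2 - 2 = c')] at h
    obtain ⟨s, t, h3, -, -, -, -, h0, h1, h2, -⟩ := h.facts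
    exact ⟨s, t, h3, h0, h1, h2⟩
  · rintro ⟨s, t, h3, h0, h1, h2⟩
    refine ⟨by omega, β.take c' ++ [t, s, t] ++ β.drop (c'+3), ?_⟩
    rw [(by omega : c' + 2 - 2 = c')]
    exact braidMoveAt_construct h3 h0 h1 h2

lemma shadowCenter_lt_length {β : List B} {c : ℕ} (h : ShadowCenter M β c) :
    c < β.length := by
  obtain ⟨hc, y, hmv⟩ := shadowCenter_iff.mp h
  obtain ⟨-, -, -, -, -, hp, -⟩ := hmv.facts
  omega

end AuxShadow
section AuxVal

variable {W : Type*} [Group W] {M : CoxeterMatrix B} (cs : CoxeterSystem M W)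

/-- The `j`-th left inversion of the word `x`. -/
noncomputable def valOf (x : List B) (j : ℕ) : W := (cs.leftInvSeq x).getD j 1

lemma valOf_eq (x : List B) (j : ℕ) :
    valOf cs x j = cs.wordProd (x.take j) * (Option.map cs.simple x[j]?).getD 1 *
      (cs.wordProd (x.take j))⁻¹ := by
  rw [valOf, cs.getD_leftInvSeq]

private lemma conj_mul_conj (P a b : W) : (P * a * P⁻¹) * (P * b * P⁻¹) = P * (a * b) * P⁻¹ := by
  simp [mul_assoc]

private lemma conj_cube (P u : W) : (P * u * P⁻¹) ^ 3 = P * u ^ 3 * P⁻¹ := by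
  rw [pow_succ, pow_succ, pow_one, pow_succ, pow_succ, pow_one]
  simp [mul_assoc]

private lemma take_eq_of_getElem? {x y : List B} {n : ℕ} (hx : n ≤ x.length)
    (hy : n ≤ y.length) (h : ∀ i < n, y[i]? = x[i]?) : y.take n = x.take n := by
  apply List.ext_getElem?
  intro i
  rcases lt_or_ge i n with hi | hi
  · rw [List.getElem?_take_of_lt hi, List.getElem?_take_of_lt hi, h i hi]
  · rw [List.getElem?_eq_none (by simp; omega), List.getElem?_eq_none (by simp; omega)]

/-- The values of the left inversion sequence on a window `s t s`. -/
lemma window_vals {x : List B} {i : ℕ} {s t : B}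
    (h0 : x[i]? = some s) (h1 : x[i+1]? = some t) (h2 : x[i+2]? = some s) :
    valOf cs x i = cs.wordProd (x.take i) * cs.simple s * (cs.wordProd (x.take i))⁻¹ ∧
    valOf cs x (i+1) = cs.wordProd (x.take i) *
      (cs.simple s * cs.simple t * cs.simple s) * (cs.wordProd (x.take i))⁻¹ ∧
    (M s t = 3 → valOf cs x (i+2) =
      cs.wordProd (x.take i) * cs.simple t * (cs.wordProd (x.take i))⁻¹) := by
  have ht1 : x.take (i+1) = x.take i ++ [s] := by
    rw [List.take_succ, h0]
    rfl
  have ht2 : x.take (i+2) = x.take i ++ [s, t] := by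
    rw [show i+2 = (i+1)+1 from rfl, List.take_succ, ht1, h1]
    simp
  refine ⟨?_, ?_, ?_⟩
  · rw [valOf_eq, h0]
    rfl
  · rw [valOf_eq, ht1, h1, cs.wordProd_append, cs.wordProd_singleton]
    simp only [Option.map_some, Option.getD_some]
    rw [mul_inv_rev, cs.inv_simple]
    simp [mul_assoc]
  · intro h3
    rw [valOf_eq, ht2, h2, cs.wordProd_append]
    have hst : cs.wordProd [s, t] = cs.simple s * cs.simple t := by
      simp [CoxeterSystem.wordProd_cons]
    rw [hst]
    simp only [Option.map_some, Option.getD_some]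
    calc cs.wordProd (x.take i) * (cs.simple s * cs.simple t) * cs.simple s *
          (cs.wordProd (x.take i) * (cs.simple s * cs.simple t))⁻¹
        = cs.wordProd (x.take i) * (cs.simple s * cs.simple t * cs.simple s * cs.simple t *
            cs.simple s) * (cs.wordProd (x.take i))⁻¹ := by
          rw [mul_inv_rev, mul_inv_rev, cs.inv_simple, cs.inv_simple]
          simp [mul_assoc]
    _ = _ := by
          rw [braid_five (cs.simple_mul_simple_self s) (cs.simple_mul_simple_self t)
            (simple_pow3 cs h3)]

/-- How a braid move permutes the left inversion sequence: it swaps positions `p` and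
`p + 2` and fixes all other values. -/
lemma BraidMoveAt.valOf_swap {x y : List B} {p : ℕ} (h : BraidMoveAt M x y p) (j : ℕ) :
    valOf cs y j = valOf cs x (if j = p then p + 2 else if j = p + 2 then p else j) := by
  obtain ⟨s, t, h3, hxe, hye, hp, hlen, hx0, hx1, hx2, hy0, hy1, hy2, hoff⟩ := h.facts
  have h3' : M t s = 3 := by rw [M.symmetric]; exact h3
  have htp : y.take p = x.take p :=
    take_eq_of_getElem? (by omega) (by omega) (fun i hi => hoff i (by omega) (by omega) (by omega))
  have hwx := window_vals cs hx0 hx1 hx2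
  have hwy := window_vals cs hy0 hy1 hy2
  by_cases hj0 : j = p
  · subst hj0
    rw [if_pos rfl, hwx.2.2 h3, hwy.1, htp]
  · by_cases hj2 : j = p + 2
    · subst hj2
      rw [if_neg hj0, if_pos rfl, hwx.1, hwy.2.2 h3', htp]
    · rw [if_neg hj0, if_neg hj2]
      by_cases hj1 : j = p + 1
      · subst hj1
        rw [hwx.2.1, hwy.2.1, htp, simple_braid cs h3']
      · rcases lt_or_ge j p with hlt | hge
        · rw [valOf_eq, valOf_eq, hoff j (by omega) (by omega) (by omega),
            take_eq_of_getElem? (le_of_lt (by omega)) (le_of_lt (by omega))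
              (fun i hi => hoff i (by omega) (by omega) (by omega))]
        · have hge3 : p + 3 ≤ j := by omega
          have hDx : x.take (p+3) = x.take p ++ [s, t, s] := by
            conv_lhs => rw [hxe]
            rw [List.take_left' (by simp; omega)]
          have hDy : y.take (p+3) = x.take p ++ [t, s, t] := by
            conv_lhs => rw [hye]
            rw [List.take_left' (by simp; omega)]
          have hdy : y.drop (p+3) = x.drop (p+3) := by
            conv_lhs => rw [hye]
            rw [List.drop_left' (by simp; omega)]
          have hsplit : ∀ w : List B, w.take j = w.take (p+3) ++ (w.drop (p+3)).take (j - (p+3)) := by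
            intro w
            conv_lhs => rw [(by omega : j = (p+3) + (j - (p+3)))]
            exact List.take_add
          have hπ : cs.wordProd (y.take j) = cs.wordProd (x.take j) := by
            rw [hsplit x, hsplit y, cs.wordProd_append, cs.wordProd_append, hDx, hDy, hdy,
              cs.wordProd_append, cs.wordProd_append, wordProd_sts cs h3]
          rw [valOf_eq, valOf_eq, hπ, hoff j (by omega) (by omega) (by omega)]

/-- Along a chain of braid moves, the inversion values are permuted by a
parity-preserving, length-respecting function. -/
lemma SeqC.valPerm {cl : List ℕ} {x y : List B} (h : SeqC M cl x y) :
    ∃ f : ℕ → ℕ, (∀ j, f j % 2 = j % 2) ∧ (∀ j, f j < x.length ↔ j < x.length) ∧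
      (∀ j, valOf cs y j = valOf cs x (f j)) := by
  induction cl generalizing x with
  | nil =>
    cases seqC_nil.mp h
    exact ⟨id, fun j => rfl, fun j => Iff.rfl, fun j => rfl⟩
  | cons c cl ih =>
    obtain ⟨z, hc, mv, rest⟩ := h
    obtain ⟨g, hg1, hg2, hg3⟩ := ih rest
    obtain ⟨-, -, -, -, -, hp, hlen, -⟩ := mv.facts
    refine ⟨fun j => if g j = c - 2 then c - 2 + 2 else if g j = c - 2 + 2 then c - 2 else g j,
      ?_, ?_, ?_⟩
    · intro j
      dsimp only
      have := hg1 j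
      split_ifs with e1 e2
      · omega
      · omega
      · exact this
    · intro j
      dsimp only
      have hb := hg2 j
      rw [mv.length_eq] at hb
      split_ifs with e1 e2
      · constructor
        · intro _
          exact hb.mp (by omega)
        · intro _
          omega
      · constructor
        · intro _
          exact hb.mp (by omega)
        · intro _
          omega
      · exact hb
    · intro j
      dsimp only
      rw [hg3 j, mv.valOf_swap cs (g j)]

/-- Values at positions not adjacent to any move center are frozen along a chain. -/
lemma SeqC.valOf_frozen {cl : List ℕ} {x y : List B} (h : SeqC M cl x y) (i : ℕ)
    (hd : ∀ d ∈ cl, d ≠ i ∧ d ≠ i + 2) : valOf cs y i = valOf cs x i := by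
  induction cl generalizing x with
  | nil =>
    cases seqC_nil.mp h
    rfl
  | cons c cl ih =>
    obtain ⟨z, hc, mv, rest⟩ := h
    have hz : valOf cs z i = valOf cs x i := by
      rw [mv.valOf_swap cs i, if_neg (by have := hd c (by simp); omega),
        if_neg (by have := hd c (by simp); omega)]
    rw [ih rest (fun d hdm => hd d (by simp [hdm])), hz]

/-- The key structural theorem: along a chain of braid moves between reduced words,
one cannot have a braid shadow centered at `c' + 2` at one end and a braid shadow
centered at `c' + 3` at the other end. -/
theorem chain_core : ∀ n : ℕ, ∀ cl : List ℕ, ∀ x y : List B, ∀ c' : ℕ,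
    cl.length ≤ n → SeqC M cl x y → cs.IsReduced x →
    ShadowCenter M x (c'+2) → ShadowCenter M y (c'+3) → False := by
  intro n
  induction n using Nat.strong_induction_on with
  | _ n ih =>
  intro cl x y c' hlen hseq hred hsx hsy
  have hexcl : ∀ d ∈ cl, d ≠ c'+1 ∧ d ≠ c'+2 ∧ d ≠ c'+3 ∧ d ≠ c'+4 := by
    intro d hd
    obtain ⟨l₁, l₂, rfl⟩ := List.append_of_mem hd
    have hlsplit : l₁.length + 1 + l₂.length ≤ n := by
      have h' := hlen
      simp at h'
      omega
    obtain ⟨z, h1, h2⟩ := seqC_append.mp hseq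
    obtain ⟨z', hd2, mv, h3⟩ := h2
    have hsz : ShadowCenter M z d ∧ ShadowCenter M z' d := by
      have h' := shadowCenter_of_move mv
      rwa [(by omega : d - 2 + 2 = d)] at h'
    have hredz : cs.IsReduced z := h1.isReduced cs hred
    have hredz' : cs.IsReduced z' := mv.isReduced cs hredz
    refine ⟨?_, ?_, ?_, ?_⟩
    · rintro rfl
      obtain ⟨e, rfl⟩ : ∃ e, c' = e + 1 := ⟨c' - 1, by omega⟩
      exact ih (n-1) (by omega) l₁.reverse z x e (by simp; omega) h1.reverse hredz
        (by rw [(by omega : e + 2 = e + 1 + 1)]; exact hsz.1) hsx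
    · rintro rfl
      exact ih (n-1) (by omega) l₂ z' y c' (by omega) h3 hredz' hsz.2 hsy
    · rintro rfl
      exact ih (n-1) (by omega) l₁ x z c' (by omega) h1 hred hsx hsz.1
    · rintro rfl
      have hredy : cs.IsReduced y := h3.isReduced cs hredz'
      exact ih (n-1) (by omega) l₂.reverse y z' (c'+1) (by simp; omega) h3.reverse hredy hsy
        (by rw [(by omega : c' + 1 + 3 = c' + 4)]; exact hsz.2)
  have hfr1 : valOf cs y (c'+1) = valOf cs x (c'+1) :=
    hseq.valOf_frozen cs (c'+1) (fun d hd => by have := hexcl d hd; omega)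
  have hfr2 : valOf cs y (c'+2) = valOf cs x (c'+2) :=
    hseq.valOf_frozen cs (c'+2) (fun d hd => by have := hexcl d hd; omega)
  obtain ⟨s, t, h3, hx0, hx1, hx2⟩ := shadowCenter_window.mp hsx
  obtain ⟨u, v, h3', hy1, hy2, hy3⟩ := shadowCenter_window.mp
    (show ShadowCenter M y ((c'+1)+2) by rwa [(by omega : c' + 1 + 2 = c' + 3)])
  have hwx := window_vals cs hx0 hx1 hx2
  have hwy := window_vals cs hy1 hy2 hy3
  set P := cs.wordProd (x.take c') with hP
  set Q := cs.wordProd (y.take (c'+1)) with hQ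
  set X := P * cs.simple s * P⁻¹ with hX
  set Y := P * cs.simple t * P⁻¹ with hY
  set A := Q * cs.simple u * Q⁻¹ with hA
  set Bv := Q * cs.simple v * Q⁻¹ with hBv
  have hXX : X * X = 1 := by
    rw [hX, conj_mul_conj, cs.simple_mul_simple_self]
    simp
  have hYY : Y * Y = 1 := by
    rw [hY, conj_mul_conj, cs.simple_mul_simple_self]
    simp
  have hXY3 : (X * Y) ^ 3 = 1 := by
    rw [hX, hY, conj_mul_conj, conj_cube, simple_pow3 cs h3]
    simp
  have hAA : A * A = 1 := by
    rw [hA, conj_mul_conj, cs.simple_mul_simple_self]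
    simp
  have hvx0 : valOf cs x c' = X := hwx.1
  have hvx1 : valOf cs x (c'+1) = X * Y * X := by
    rw [hwx.2.1, hX, hY]
    simp [mul_assoc]
  have hvx2 : valOf cs x (c'+2) = Y := hwx.2.2 h3
  have hvy1 : valOf cs y (c'+1) = A := hwy.1
  have hvy2 : valOf cs y ((c'+1)+1) = A * Bv * A := by
    rw [hwy.2.1, hA, hBv]
    simp [mul_assoc]
  have hvy3 : valOf cs y ((c'+1)+2) = Bv := hwy.2.2 h3'
  have hAeq : A = X * Y * X := by rw [← hvy1, hfr1, hvx1]
  have hABA : A * Bv * A = Y := by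
    rw [← hvy2, (by omega : (c'+1)+1 = c'+2), hfr2, hvx2]
  have hBvX : Bv = X := by
    have e1 : A * (A * Bv * A) * A = Bv := by
      calc A * (A * Bv * A) * A = A * A * Bv * (A * A) := by simp [mul_assoc]
      _ = Bv := by rw [hAA, one_mul, mul_one]
    rw [← e1, hABA, hAeq]
    exact braid_dih hXX hYY hXY3
  obtain ⟨f, hfpar, hfbd, hfval⟩ := hseq.valPerm cs
  have hlenxy : y.length = x.length := hseq.length_eq
  have hc'len : c' < x.length := by
    have h' : c' + 2 < x.length := by
      by_contra hc
      rw [List.getElem?_eq_none (by omega)] at hx2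
      exact absurd hx2 (by simp)
    omega
  have hc3len : c' + 3 < x.length := by
    have h' : c' + 3 < y.length := by
      by_contra hc
      rw [List.getElem?_eq_none (by omega)] at hy3
      exact absurd hy3 (by simp)
    omega
  have hfc3 : f (c'+3) < x.length := (hfbd (c'+3)).mpr hc3len
  have hval_eq : valOf cs x (f (c'+3)) = valOf cs x c' := by
    rw [← hfval (c'+3), (by omega : c' + 3 = (c'+1)+2), hvy3, hBvX, hvx0]
  have hne : f (c'+3) ≠ c' := by
    have := hfpar (c'+3)
    omega
  have hnd := hred.nodup_leftInvSeq
  have hlis : (cs.leftInvSeq x).length = x.length := cs.length_leftInvSeq x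
  have e1 : (cs.leftInvSeq x)[f (c'+3)]'(by omega) = (cs.leftInvSeq x)[c']'(by omega) := by
    have g1 : valOf cs x (f (c'+3)) = (cs.leftInvSeq x)[f (c'+3)]'(by omega) :=
      List.getD_eq_getElem _ _ (by omega)
    have g2 : valOf cs x c' = (cs.leftInvSeq x)[c']'(by omega) :=
      List.getD_eq_getElem _ _ (by omega)
    rw [← g1, ← g2, hval_eq]
  exact hne (hnd.getElem_inj_iff.mp e1)

end AuxVal

section AuxL3

variable {W : Type*} [Group W] {M : CoxeterMatrix B} (cs : CoxeterSystem M W)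

lemma BraidEquiv.symm' {x y : List B} (h : BraidEquiv M x y) : BraidEquiv M y x := by
  have hs : Symmetric (BraidMove M) := fun a b ⟨p, mv⟩ => ⟨p, mv.symm⟩
  haveI : Std.Symm (BraidMove M) := ⟨fun a b h => hs h⟩
  exact Std.Symm.symm (r := Relation.ReflTransGen (BraidMove M)) _ _ h

lemma braidClass_isReduced {α x : List B} (hα : cs.IsReduced α)
    (hx : x ∈ braidClass M α) : cs.IsReduced x := by
  obtain ⟨cl, hcl⟩ := braidEquiv_iff_seqC.mp hx
  exact hcl.isReduced cs hα

/-- The main structural theorem (L3): the braid class of a reduced word has no two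
braid shadows with adjacent centers. -/
theorem no_adjacent_classCenters {α : List B} (hα : cs.IsReduced α) {c : ℕ}
    (h1 : c ∈ classCenters M α) (h2 : c + 1 ∈ classCenters M α) : False := by
  obtain ⟨x, hx, hsx⟩ := h1
  obtain ⟨y, hy, hsy⟩ := h2
  obtain ⟨cl, hcl⟩ := braidEquiv_iff_seqC.mp ((BraidEquiv.symm' hx).trans hy)
  have hredx : cs.IsReduced x := braidClass_isReduced cs hα hx
  obtain ⟨c₂, rfl⟩ : ∃ e, c = e + 2 := ⟨c - 2, by have := hsx.1; omega⟩
  exact chain_core cs cl.length cl x y c₂ le_rfl hcl hredx hsx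
    (by rwa [(by omega : c₂ + 3 = c₂ + 2 + 1)])

end AuxL3
section AuxCenters

variable {M : CoxeterMatrix B}

lemma mem_braidClass_self (α : List B) : α ∈ braidClass M α := Relation.ReflTransGen.refl

lemma braidClass_length {α x : List B} (hx : x ∈ braidClass M α) : x.length = α.length := by
  obtain ⟨cl, hcl⟩ := braidEquiv_iff_seqC.mp hx
  exact hcl.length_eq

lemma classCenters_finite (α : List B) : (classCenters M α).Finite := by
  apply Set.Finite.subset (Set.finite_Iio (α.length))
  rintro c ⟨x, hx, hsc⟩
  have h1 := shadowCenter_lt_length hsc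
  have h2 := braidClass_length hx
  simp only [Set.mem_Iio]
  omega

lemma nthCenter_spec {α : List B} {j : ℕ} (h1 : 1 ≤ j) (h2 : j ≤ braidDim M α) :
    nthCenter M α j ∈ classCenters M α := by
  have hf : (setOf (· ∈ classCenters M α)).Finite := classCenters_finite α
  have hcard : braidDim M α = hf.toFinset.card := Set.ncard_eq_toFinset_card _ hf
  exact Nat.nth_mem_of_lt_card hf (lt_of_lt_of_eq (show j - 1 < braidDim M α by omega) hcard)

lemma nthCenter_inj {α : List B} {i j : ℕ} (hi1 : 1 ≤ i) (hi2 : i ≤ braidDim M α)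
    (hj1 : 1 ≤ j) (hj2 : j ≤ braidDim M α) (h : nthCenter M α i = nthCenter M α j) :
    i = j := by
  have hf : (setOf (· ∈ classCenters M α)).Finite := classCenters_finite α
  have hcard : braidDim M α = hf.toFinset.card := Set.ncard_eq_toFinset_card _ hf
  have := Nat.nth_injOn hf (show i - 1 ∈ Set.Iio hf.toFinset.card by simp; omega)
    (show j - 1 ∈ Set.Iio hf.toFinset.card by simp; omega) h
  omega

lemma nthCenter_two_le {α : List B} {j : ℕ} (h1 : 1 ≤ j) (h2 : j ≤ braidDim M α) :
    2 ≤ nthCenter M α j := by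
  obtain ⟨x, hx, hsc⟩ := nthCenter_spec h1 h2
  exact hsc.1

/-- Distinct shadow centers of the class of a reduced word differ by at least 2. -/
lemma centers_gap {W : Type*} [Group W] (cs : CoxeterSystem M W) {α : List B}
    (hα : cs.IsReduced α) {a b : ℕ} (ha : a ∈ classCenters M α) (hb : b ∈ classCenters M α)
    (hne : a ≠ b) : a + 2 ≤ b ∨ b + 2 ≤ a := by
  by_contra hcon
  push_neg at hcon
  have : b = a + 1 ∨ a = b + 1 := by omega
  rcases this with h | h
  · exact no_adjacent_classCenters cs hα ha (h ▸ hb)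
  · exact no_adjacent_classCenters cs hα hb (h ▸ ha)

end AuxCenters

section AuxLSeq

variable {M : CoxeterMatrix B}

/-- Label-level braid sequences: like `BraidSeq` but with all moves directed. -/
def LSeq (M : CoxeterMatrix B) (α : List B) : List ℕ → List B → List B → Prop
  | [], x, y => x = y
  | j :: js, x, y => ∃ z, 1 ≤ j ∧ j ≤ braidDim M α ∧
      BraidMoveAt M x z (nthCenter M α j - 2) ∧ LSeq M α js z y

@[simp] lemma lseq_nil {α x y : List B} : LSeq M α [] x y ↔ x = y := Iff.rfl

@[simp] lemma lseq_cons {α : List B} {j : ℕ} {js : List ℕ} {x y : List B} :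
    LSeq M α (j :: js) x y ↔ ∃ z, 1 ≤ j ∧ j ≤ braidDim M α ∧
      BraidMoveAt M x z (nthCenter M α j - 2) ∧ LSeq M α js z y := Iff.rfl

lemma braidSeq_iff_lseq {α : List B} {js : List ℕ} {x y : List B} :
    BraidSeq M α js x y ↔ LSeq M α js x y := by
  induction js generalizing x with
  | nil => exact Iff.rfl
  | cons j js ih =>
    constructor
    · rintro ⟨z, ⟨hj1, hj2, hmv⟩, hrest⟩
      rcases hmv with hmv | hmv
      · exact ⟨z, hj1, hj2, hmv, ih.mp hrest⟩
      · exact ⟨z, hj1, hj2, hmv.symm, ih.mp hrest⟩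
    · rintro ⟨z, hj1, hj2, hmv, hrest⟩
      exact ⟨z, ⟨hj1, hj2, Or.inl hmv⟩, ih.mpr hrest⟩

lemma lseq_append {α : List B} {l₁ l₂ : List ℕ} {x y : List B} :
    LSeq M α (l₁ ++ l₂) x y ↔ ∃ z, LSeq M α l₁ x z ∧ LSeq M α l₂ z y := by
  induction l₁ generalizing x with
  | nil =>
    constructor
    · intro h
      exact ⟨x, rfl, h⟩
    · rintro ⟨z, hz, h⟩
      cases lseq_nil.mp hz
      exact h
  | cons c cl ih =>
    simp only [List.cons_append, lseq_cons, ih]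
    constructor
    · rintro ⟨z, h1, h2, mv, w, h3, h4⟩
      exact ⟨w, ⟨z, h1, h2, mv, h3⟩, h4⟩
    · rintro ⟨w, ⟨z, h1, h2, mv, h3⟩, h4⟩
      exact ⟨z, h1, h2, mv, w, h3, h4⟩

lemma LSeq.bounds {α : List B} {js : List ℕ} {x y : List B} (h : LSeq M α js x y) :
    ∀ j ∈ js, 1 ≤ j ∧ j ≤ braidDim M α := by
  induction js generalizing x with
  | nil => simp
  | cons j js ih =>
    obtain ⟨z, h1, h2, mv, hrest⟩ := h
    intro i hi
    rcases List.mem_cons.mp hi with rfl | hi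
    · exact ⟨h1, h2⟩
    · exact ih hrest i hi

lemma LSeq.toSeqC {α : List B} {js : List ℕ} {x y : List B} (h : LSeq M α js x y) :
    SeqC M (js.map (nthCenter M α)) x y := by
  induction js generalizing x with
  | nil =>
    cases lseq_nil.mp h
    rfl
  | cons j js ih =>
    obtain ⟨z, h1, h2, mv, hrest⟩ := h
    exact ⟨z, nthCenter_two_le h1 h2, mv, ih hrest⟩

lemma lseq_of_seqC {α : List B} {js : List ℕ} {x y : List B}
    (hb : ∀ j ∈ js, 1 ≤ j ∧ j ≤ braidDim M α)
    (h : SeqC M (js.map (nthCenter M α)) x y) : LSeq M α js x y := by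
  induction js generalizing x with
  | nil => exact seqC_nil.mp h
  | cons j js ih =>
    obtain ⟨z, hc, mv, rest⟩ := h
    exact ⟨z, (hb j (by simp)).1, (hb j (by simp)).2, mv,
      ih (fun i hi => hb i (by simp [hi])) rest⟩

end AuxLSeq

section AuxSig

variable {W : Type*} [Group W] {M : CoxeterMatrix B} (cs : CoxeterSystem M W)
variable {α : List B}

lemma sig_def (x : List B) (i : ℕ) : sig M α x i = x[nthCenter M α i - 1]? := rfl

lemma sig_eq_of_move (hα : cs.IsReduced α) {x z : List B} {j i : ℕ}
    (hj1 : 1 ≤ j) (hj2 : j ≤ braidDim M α) (hi1 : 1 ≤ i) (hi2 : i ≤ braidDim M α)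
    (hij : i ≠ j) (hmv : BraidMoveAt M x z (nthCenter M α j - 2)) :
    sig M α z i = sig M α x i := by
  obtain ⟨ai, hai⟩ : ∃ e, nthCenter M α i = e + 2 :=
    ⟨nthCenter M α i - 2, by have := nthCenter_two_le hi1 hi2; omega⟩
  obtain ⟨aj, haj⟩ : ∃ e, nthCenter M α j = e + 2 :=
    ⟨nthCenter M α j - 2, by have := nthCenter_two_le hj1 hj2; omega⟩
  have hgap := centers_gap cs hα (nthCenter_spec hi1 hi2) (nthCenter_spec hj1 hj2)
    (fun h => hij (nthCenter_inj hi1 hi2 hj1 hj2 h))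
  obtain ⟨-, -, -, -, -, -, -, -, -, -, -, -, -, hoff⟩ := hmv.facts
  rw [sig_def, sig_def, hai]
  rw [haj] at hoff
  exact hoff (ai + 1) (by omega) (by omega) (by omega)

lemma sig_ne_of_move {x z : List B} {j : ℕ}
    (hj1 : 1 ≤ j) (hj2 : j ≤ braidDim M α)
    (hmv : BraidMoveAt M x z (nthCenter M α j - 2)) :
    sig M α z j ≠ sig M α x j := by
  obtain ⟨aj, haj⟩ : ∃ e, nthCenter M α j = e + 2 :=
    ⟨nthCenter M α j - 2, by have := nthCenter_two_le hj1 hj2; omega⟩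
  obtain ⟨s, t, h3, -, -, -, -, -, hx1, -, -, hz1, -, -⟩ := hmv.facts
  rw [haj] at hx1 hz1
  rw [show aj + 2 - 2 = aj by omega] at hx1 hz1
  have hst : s ≠ t := by
    intro he
    rw [he, M.diagonal] at h3
    omega
  rw [sig_def, sig_def, haj, (by omega : aj + 2 - 1 = aj + 1), hz1, hx1]
  intro hcon
  exact hst (Option.some_injective _ hcon)

lemma sig_const_of_not_mem (hα : cs.IsReduced α) {js : List ℕ} {z y : List B} {j : ℕ}
    (hj1 : 1 ≤ j) (hj2 : j ≤ braidDim M α)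
    (h : LSeq M α js z y) (hmem : j ∉ js) : sig M α y j = sig M α z j := by
  induction js generalizing z with
  | nil =>
    cases lseq_nil.mp h
    rfl
  | cons i js ih =>
    obtain ⟨w, hi1, hi2, mv, hrest⟩ := h
    have hnm : j ∉ js := fun hh => hmem (List.mem_cons_of_mem i hh)
    have hne : j ≠ i := fun he => hmem (he ▸ List.mem_cons_self)
    rw [ih hrest hnm, sig_eq_of_move cs hα hi1 hi2 hj1 hj2 hne mv]

/-- The set of signature coordinates where `x` and `y` differ. -/
noncomputable def sigDiff (M : CoxeterMatrix B) (α x y : List B) : Finset ℕ :=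
  (Finset.Icc 1 (braidDim M α)).filter (fun i => sig M α x i ≠ sig M α y i)

lemma card_sigDiff_le (hα : cs.IsReduced α) {ls : List ℕ} {x y : List B}
    (h : LSeq M α ls x y) : (sigDiff M α x y).card ≤ ls.length := by
  induction ls generalizing x with
  | nil =>
    cases lseq_nil.mp h
    simp [sigDiff]
  | cons j js ih =>
    obtain ⟨z, hj1, hj2, hmv, hrest⟩ := h
    have hsub : sigDiff M α x y ⊆ insert j (sigDiff M α z y) := by
      intro i hi
      simp only [sigDiff, Finset.mem_filter, Finset.mem_Icc] at hi
      by_cases hij : i = j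
      · simp [hij]
      · have : sig M α z i = sig M α x i :=
          sig_eq_of_move cs hα hj1 hj2 hi.1.1 hi.1.2 hij hmv
        simp only [Finset.mem_insert, sigDiff, Finset.mem_filter, Finset.mem_Icc]
        right
        exact ⟨hi.1, by rw [this]; exact hi.2⟩
    calc (sigDiff M α x y).card ≤ (insert j (sigDiff M α z y)).card :=
          Finset.card_le_card hsub
    _ ≤ (sigDiff M α z y).card + 1 := Finset.card_insert_le _ _
    _ ≤ js.length + 1 := by have := ih hrest; omega
    _ = (j :: js).length := by simp

lemma sigDiff_eq_of_nodup (hα : cs.IsReduced α) {js : List ℕ} {x y : List B}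
    (h : LSeq M α js x y) (hnd : js.Nodup) : sigDiff M α x y = js.toFinset := by
  induction js generalizing x with
  | nil =>
    cases lseq_nil.mp h
    simp [sigDiff]
  | cons j js ih =>
    obtain ⟨z, hj1, hj2, hmv, hrest⟩ := h
    obtain ⟨hjm, hnd'⟩ := List.nodup_cons.mp hnd
    have hrec := ih hrest hnd'
    ext i
    simp only [sigDiff, Finset.mem_filter, Finset.mem_Icc, List.toFinset_cons,
      Finset.mem_insert]
    by_cases hij : i = j
    · subst hij
      have h1 : sig M α y i = sig M α z i := sig_const_of_not_mem cs hα hj1 hj2 hrest hjm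
      have h2 : sig M α z i ≠ sig M α x i := sig_ne_of_move hj1 hj2 hmv
      constructor
      · intro _
        exact Or.inl rfl
      · intro _
        refine ⟨⟨hj1, hj2⟩, ?_⟩
        rw [h1]
        exact fun hc => h2 hc.symm
    · by_cases hb : 1 ≤ i ∧ i ≤ braidDim M α
      · have heq : sig M α z i = sig M α x i :=
          sig_eq_of_move cs hα hj1 hj2 hb.1 hb.2 hij hmv
        have : (i ∈ sigDiff M α z y) ↔ i ∈ js.toFinset := by rw [hrec]
        simp only [sigDiff, Finset.mem_filter, Finset.mem_Icc] at this
        constructor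
        · intro ⟨hbb, hne⟩
          right
          exact this.mp ⟨hbb, by rw [heq]; exact hne⟩
        · rintro (rfl | hm)
          · exact absurd rfl hij
          · obtain ⟨hbb, hne⟩ := this.mpr hm
            exact ⟨hbb, by rw [← heq]; exact hne⟩
      · constructor
        · intro ⟨hbb, _⟩
          exact absurd hbb hb
        · rintro (rfl | hm)
          · exact absurd ⟨hj1, hj2⟩ hb
          · have : i ∈ sigDiff M α z y := by rw [hrec]; simpa using hm
            simp only [sigDiff, Finset.mem_filter, Finset.mem_Icc] at this
            exact absurd this.1 hb

/-- Backward direction: a `Nodup` braid sequence is minimal. -/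
lemma minimal_of_nodup (hα : cs.IsReduced α) {js : List ℕ} {β : List B}
    (hseq : BraidSeq M α js α β) (hnd : js.Nodup) : MinimalBraidSeq M α js α β := by
  refine ⟨hseq, fun ls hls => ?_⟩
  have h1 : sigDiff M α α β = js.toFinset :=
    sigDiff_eq_of_nodup cs hα (braidSeq_iff_lseq.mp hseq) hnd
  have h2 : (sigDiff M α α β).card ≤ ls.length :=
    card_sigDiff_le cs hα (braidSeq_iff_lseq.mp hls)
  rwa [h1, List.toFinset_card_of_nodup hnd] at h2

end AuxSig
section AuxCancel

variable {M : CoxeterMatrix B}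

/-- Two braid moves at centers with disjoint windows can be transposed. -/
lemma braid_swap {x z w : List B} {p q : ℕ} (h1 : BraidMoveAt M x z p)
    (h2 : BraidMoveAt M z w q) (hpq : q + 2 < p ∨ p + 2 < q) :
    ∃ z', BraidMoveAt M x z' q ∧ BraidMoveAt M z' w p := by
  obtain ⟨s, t, h3, hxe, hze, hp, hlen1, hx0, hx1, hx2, hz0, hz1, hz2, hoff1⟩ := h1.facts
  obtain ⟨u, v, h3', -, -, hq, hlen2, hzq0, hzq1, hzq2, hw0, hw1, hw2, hoff2⟩ := h2.facts
  have hxq0 : x[q]? = some u := by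
    rw [← hoff1 q (by omega) (by omega) (by omega)]; exact hzq0
  have hxq1 : x[q+1]? = some v := by
    rw [← hoff1 (q+1) (by omega) (by omega) (by omega)]; exact hzq1
  have hxq2 : x[q+2]? = some u := by
    rw [← hoff1 (q+2) (by omega) (by omega) (by omega)]; exact hzq2
  have hmv1 : BraidMoveAt M x (x.take q ++ [v, u, v] ++ x.drop (q+3)) q :=
    braidMoveAt_construct h3' hxq0 hxq1 hxq2
  refine ⟨_, hmv1, ?_⟩
  obtain ⟨u', v', -, -, -, -, hlen3, hc0, hc1, hc2, hz'0, hz'1, hz'2, hoff3⟩ := hmv1.facts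
  have huu : u' = u := Option.some_injective _ (hc0.symm.trans hxq0)
  have hvv : v' = v := Option.some_injective _ (hc1.symm.trans hxq1)
  subst huu hvv
  apply braidMoveAt_of_facts h3
  · omega
  · rw [hoff3 p (by omega) (by omega) (by omega)]; exact hx0
  · rw [hoff3 (p+1) (by omega) (by omega) (by omega)]; exact hx1
  · rw [hoff3 (p+2) (by omega) (by omega) (by omega)]; exact hx2
  · rw [hoff2 p (by omega) (by omega) (by omega)]; exact hz0
  · rw [hoff2 (p+1) (by omega) (by omega) (by omega)]; exact hz1
  · rw [hoff2 (p+2) (by omega) (by omega) (by omega)]; exact hz2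
  · intro i hi0 hi1 hi2
    by_cases hq0 : i = q
    · subst hq0; rw [hw0, hz'0]
    · by_cases hq1 : i = q + 1
      · subst hq1; rw [hw1, hz'1]
      · by_cases hq2 : i = q + 2
        · subst hq2; rw [hw2, hz'2]
        · rw [hoff2 i hq0 hq1 hq2, hoff1 i hi0 hi1 hi2, hoff3 i hq0 hq1 hq2]

/-- Along a chain all of whose move centers avoid a position's neighborhood, the letter
at that position is unchanged. -/
lemma seqC_untouched {cl : List ℕ} {v w : List B} (h : SeqC M cl v w) (i : ℕ)
    (hd : ∀ d ∈ cl, i + 2 < d ∨ d < i) : w[i]? = v[i]? := by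
  induction cl generalizing v with
  | nil => cases seqC_nil.mp h; rfl
  | cons d cl ih =>
    obtain ⟨z, hd2, mv, rest⟩ := h
    obtain ⟨-, -, -, -, -, -, -, -, -, -, -, -, -, hoff⟩ := mv.facts
    have hcond := hd d (by simp)
    rw [ih rest (fun e he => hd e (by simp [he])),
      hoff i (by omega) (by omega) (by omega)]

/-- Tracking the letter at position `c' + 2` through a chain avoiding centers
`c'+2`, `c'+3` and containing `c'+4` at most once. -/
lemma track_pos {c' : ℕ} {cl : List ℕ} {v w : List B} (h : SeqC M cl v w)
    (hnd : cl.Nodup) (hcl : ∀ d ∈ cl, d ≠ c'+2 ∧ d ≠ c'+3) :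
    (c'+4 ∉ cl → w[c'+2]? = v[c'+2]?) ∧
    (c'+4 ∈ cl → ∃ a b, v[c'+2]? = some b ∧ w[c'+2]? = some a ∧ M b a = 3) := by
  induction cl generalizing v with
  | nil =>
    cases seqC_nil.mp h
    exact ⟨fun _ => rfl, by simp⟩
  | cons d cl ih =>
    obtain ⟨z, hd2, mv, rest⟩ := h
    obtain ⟨hndh, hndt⟩ := List.nodup_cons.mp hnd
    have ihr := ih rest hndt (fun e he => hcl e (by simp [he]))
    by_cases hd4 : d = c' + 4
    · subst hd4
      obtain ⟨s₁, t₁, h3₁, -, -, -, -, hv0, -, -, hz0, -, -, -⟩ := mv.facts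
      rw [show c' + 4 - 2 = c' + 2 by omega] at hv0 hz0
      have hwz : w[c'+2]? = z[c'+2]? := ihr.1 hndh
      constructor
      · intro hni
        exact absurd (List.mem_cons_self) hni
      · intro _
        exact ⟨t₁, s₁, hv0, by rw [hwz]; exact hz0, h3₁⟩
    · have hcond := hcl d (by simp)
      obtain ⟨-, -, -, -, -, -, -, -, -, -, -, -, -, hoff⟩ := mv.facts
      have hzv : z[c'+2]? = v[c'+2]? := by
        apply hoff <;> omega
      constructor
      · intro hni
        have : c'+4 ∉ cl := fun hh => hni (List.mem_cons_of_mem _ hh)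
        rw [ihr.1 this, hzv]
      · intro hin
        have hin' : c'+4 ∈ cl := by
          rcases List.mem_cons.mp hin with he | he
          · exact absurd he.symm hd4
          · exact he
        obtain ⟨a, b, hb, ha, hM⟩ := ihr.2 hin'
        exact ⟨a, b, by rw [← hzv]; exact hb, ha, hM⟩

/-- Tracking the letter at position `c'` through a chain avoiding centers
`c'+1`, `c'+2` and containing `c'` at most once. -/
lemma track_neg {c' : ℕ} {cl : List ℕ} {v w : List B} (h : SeqC M cl v w)
    (hnd : cl.Nodup) (hcl : ∀ d ∈ cl, d ≠ c'+1 ∧ d ≠ c'+2) :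
    (c' ∉ cl → w[c']? = v[c']?) ∧
    (c' ∈ cl → ∃ a b, v[c']? = some b ∧ w[c']? = some a ∧ M b a = 3) := by
  induction cl generalizing v with
  | nil =>
    cases seqC_nil.mp h
    exact ⟨fun _ => rfl, by simp⟩
  | cons d cl ih =>
    obtain ⟨z, hd2, mv, rest⟩ := h
    obtain ⟨hndh, hndt⟩ := List.nodup_cons.mp hnd
    have ihr := ih rest hndt (fun e he => hcl e (by simp [he]))
    by_cases hd0 : d = c'
    · subst hd0
      obtain ⟨s₁, t₁, h3₁, -, -, -, -, -, -, hv2, -, -, hz2, -⟩ := mv.facts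
      rw [show d - 2 + 2 = d by omega] at hv2 hz2
      have hwz : w[d]? = z[d]? := ihr.1 hndh
      constructor
      · intro hni
        exact absurd (List.mem_cons_self) hni
      · intro _
        exact ⟨t₁, s₁, hv2, by rw [hwz]; exact hz2, h3₁⟩
    · have hcond := hcl d (by simp)
      obtain ⟨-, -, -, -, -, -, -, -, -, -, -, -, -, hoff⟩ := mv.facts
      have hzv : z[c']? = v[c']? := by
        apply hoff <;> omega
      constructor
      · intro hni
        have : c' ∉ cl := fun hh => hni (List.mem_cons_of_mem _ hh)
        rw [ihr.1 this, hzv]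
      · intro hin
        have hin' : c' ∈ cl := by
          rcases List.mem_cons.mp hin with he | he
          · exact absurd he.symm hd0
          · exact he
        obtain ⟨a, b, hb, ha, hM⟩ := ihr.2 hin'
        exact ⟨a, b, by rw [← hzv]; exact hb, ha, hM⟩

/-- Between two braid moves at the same center `c' + 2`, a `Nodup` chain avoiding the
center and its neighbors cannot use the adjacent centers `c'` or `c' + 4`. -/
lemma cancel_no_pm2 (hTF : TriangleFree M) {c' : ℕ} {cl : List ℕ} {u v w w' : List B}
    (h1 : BraidMoveAt M u v c') (hseq : SeqC M cl v w) (h2 : BraidMoveAt M w w' c')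
    (hnd : cl.Nodup) (hcl : ∀ d ∈ cl, d ≠ c'+1 ∧ d ≠ c'+2 ∧ d ≠ c'+3) :
    c' ∉ cl ∧ c'+4 ∉ cl := by
  obtain ⟨s, t, h3, -, -, -, -, -, -, -, hv0, hv1, hv2, -⟩ := h1.facts
  obtain ⟨p₁, q₁, h3₂, -, -, -, -, hw0, hw1, hw2, -, -, -, -⟩ := h2.facts
  have hmid : w[c'+1]? = v[c'+1]? :=
    seqC_untouched hseq (c'+1) (fun d hd => by have := hcl d hd; omega)
  have hq₁ : q₁ = s := by
    rw [hmid, hv1] at hw1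
    exact (Option.some_injective _ hw1).symm
  have hMtt : M t t = 1 := M.diagonal t
  by_cases hm1 : c' ∈ cl <;> by_cases hm4 : c'+4 ∈ cl
  · exfalso
    obtain ⟨a, b, hb, ha, hM⟩ :=
      (track_neg hseq hnd (fun d hd => ⟨(hcl d hd).1, (hcl d hd).2.1⟩)).2 hm1
    obtain ⟨a₂, b₂, hb₂, ha₂, hM₂⟩ :=
      (track_pos hseq hnd (fun d hd => ⟨(hcl d hd).2.1, (hcl d hd).2.2⟩)).2 hm4
    have hbt : b = t := Option.some_injective _ (hb.symm.trans hv0)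
    have hap : a = p₁ := Option.some_injective _ (ha.symm.trans hw0)
    have hbt₂ : b₂ = t := Option.some_injective _ (hb₂.symm.trans hv2)
    have hap₂ : a₂ = p₁ := Option.some_injective _ (ha₂.symm.trans hw2)
    rw [hbt, hap] at hM
    refine hTF s t p₁ ⟨Or.inr ?_, Or.inr ?_, Or.inr ?_⟩
    · omega
    · omega
    · have : M p₁ s = 3 := hq₁ ▸ h3₂
      rw [M.symmetric] at this
      omega
  · exfalso
    obtain ⟨a, b, hb, ha, hM⟩ :=
      (track_neg hseq hnd (fun d hd => ⟨(hcl d hd).1, (hcl d hd).2.1⟩)).2 hm1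
    have hbt : b = t := Option.some_injective _ (hb.symm.trans hv0)
    have hap : a = p₁ := Option.some_injective _ (ha.symm.trans hw0)
    have hpt : p₁ = t := by
      have hwv : w[c'+2]? = v[c'+2]? :=
        (track_pos hseq hnd (fun d hd => ⟨(hcl d hd).2.1, (hcl d hd).2.2⟩)).1 hm4
      rw [hwv, hv2] at hw2
      exact (Option.some_injective _ hw2).symm
    rw [hbt, hap, hpt, hMtt] at hM
    omega
  · exfalso
    obtain ⟨a₂, b₂, hb₂, ha₂, hM₂⟩ :=
      (track_pos hseq hnd (fun d hd => ⟨(hcl d hd).2.1, (hcl d hd).2.2⟩)).2 hm4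
    have hbt₂ : b₂ = t := Option.some_injective _ (hb₂.symm.trans hv2)
    have hap₂ : a₂ = p₁ := Option.some_injective _ (ha₂.symm.trans hw2)
    have hpt : p₁ = t := by
      have hwv : w[c']? = v[c']? :=
        (track_neg hseq hnd (fun d hd => ⟨(hcl d hd).1, (hcl d hd).2.1⟩)).1 hm1
      rw [hwv, hv0] at hw0
      exact (Option.some_injective _ hw0).symm
    rw [hbt₂, hap₂, hpt, hMtt] at hM₂
    omega
  · exact ⟨hm1, hm4⟩

/-- The cancellation lemma: two braid moves at the same center with a clean chain in
between cancel. -/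
lemma cancel_core (hTF : TriangleFree M) {c' : ℕ} : ∀ {cl : List ℕ} {u v w w' : List B},
    BraidMoveAt M u v c' → SeqC M cl v w → BraidMoveAt M w w' c' → cl.Nodup →
    (∀ d ∈ cl, d ≠ c'+1 ∧ d ≠ c'+2 ∧ d ≠ c'+3) → SeqC M cl u w' := by
  intro cl
  induction cl with
  | nil =>
    intro u v w w' h1 hseq h2 hnd hcl
    cases seqC_nil.mp hseq
    exact seqC_nil.mpr (h1.symm.unique h2)
  | cons d cl ih =>
    intro u v w w' h1 hseq h2 hnd hcl
    obtain ⟨z, hd2, mv, rest⟩ := hseq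
    have hno := cancel_no_pm2 hTF h1 (seqC_cons.mpr ⟨z, hd2, mv, rest⟩) h2 hnd hcl
    have hdne : d ≠ c' ∧ d ≠ c' + 4 := by
      constructor
      · intro he
        exact hno.1 (he ▸ List.mem_cons_self)
      · intro he
        exact hno.2 (he ▸ List.mem_cons_self)
    have hdh := hcl d (by simp)
    have hcond : c' + 2 < d - 2 ∨ (d - 2) + 2 < c' := by omega
    obtain ⟨v₁, mv1, mv2⟩ := braid_swap h1 mv (by omega)
    exact ⟨v₁, hd2, mv1,
      ih mv2 rest h2 (List.nodup_cons.mp hnd).2 (fun e he => hcl e (by simp [he]))⟩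

/-- Any list with a duplicate contains a "clean" duplicated pair. -/
lemma exists_clean_dup {l : List ℕ} (h : ¬ l.Nodup) :
    ∃ (pre : List ℕ) (j : ℕ) (mid post : List ℕ),
      l = pre ++ j :: (mid ++ j :: post) ∧ j ∉ mid ∧ mid.Nodup := by
  induction l with
  | nil => exact absurd List.nodup_nil h
  | cons a l' ih =>
    by_cases h' : l'.Nodup
    · have ha : a ∈ l' := by
        by_contra hna
        exact h (List.nodup_cons.mpr ⟨hna, h'⟩)
      obtain ⟨m, q, rfl⟩ := List.append_of_mem ha
      have hmnd : m.Nodup := ((List.sublist_append_left m (a :: q)).nodup) h'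
      have hnam : a ∉ m := by
        intro ham
        obtain ⟨-, -, hdisj⟩ := List.nodup_append'.mp h'
        exact hdisj ham List.mem_cons_self
      exact ⟨[], a, m, q, rfl, hnam, hmnd⟩
    · obtain ⟨pre, j, mid, post, heq, hjm, hmd⟩ := ih h'
      exact ⟨a :: pre, j, mid, post, by rw [heq]; rfl, hjm, hmd⟩

end AuxCancel

section AuxForward

variable {W : Type*} [Group W] {M : CoxeterMatrix B} (cs : CoxeterSystem M W)

/-- Forward direction: a minimal braid sequence has no duplicate labels. -/
lemma nodup_of_minimal (hTF : TriangleFree M) {α β : List B} (hα : cs.IsReduced α)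
    {js : List ℕ} (hmin : MinimalBraidSeq M α js α β) : js.Nodup := by
  by_contra hnd
  obtain ⟨pre, j, mid, post, heq, hjmid, hmidnd⟩ := exists_clean_dup hnd
  have hls := braidSeq_iff_lseq.mp hmin.1
  rw [heq] at hls
  obtain ⟨u, hpre, hrest⟩ := lseq_append.mp hls
  obtain ⟨v, hj1, hj2, hmv1, hrest2⟩ := hrest
  obtain ⟨w, hmid, hrest3⟩ := lseq_append.mp hrest2
  obtain ⟨w', hj1', hj2', hmv2, hpost⟩ := hrest3
  obtain ⟨c', hc'⟩ : ∃ e, nthCenter M α j = e + 2 :=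
    ⟨nthCenter M α j - 2, by have := nthCenter_two_le hj1 hj2; omega⟩
  rw [hc', (by omega : c' + 2 - 2 = c')] at hmv1 hmv2
  have hseqC := hmid.toSeqC
  have hclcond : ∀ d ∈ mid.map (nthCenter M α), d ≠ c'+1 ∧ d ≠ c'+2 ∧ d ≠ c'+3 := by
    rintro d hd
    obtain ⟨i, him, rfl⟩ := List.mem_map.mp hd
    obtain ⟨hi1, hi2⟩ := hmid.bounds i him
    have hii : nthCenter M α i ≠ nthCenter M α j := by
      intro he
      exact hjmid ((nthCenter_inj hi1 hi2 hj1 hj2 he) ▸ him)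
    have hgap := centers_gap cs hα (nthCenter_spec hi1 hi2) (nthCenter_spec hj1 hj2) hii
    rw [hc'] at hgap hii
    refine ⟨?_, ?_, ?_⟩ <;> omega
  have hndmap : (mid.map (nthCenter M α)).Nodup := by
    refine hmidnd.map_on ?_
    intro a ha b hb hab
    obtain ⟨ha1, ha2⟩ := hmid.bounds a ha
    obtain ⟨hb1, hb2⟩ := hmid.bounds b hb
    exact nthCenter_inj ha1 ha2 hb1 hb2 hab
  have hcan : SeqC M (mid.map (nthCenter M α)) u w' :=
    cancel_core hTF hmv1 hseqC hmv2 hndmap hclcond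
  have hlmid : LSeq M α mid u w' := lseq_of_seqC (hmid.bounds) hcan
  have hnew : LSeq M α (pre ++ (mid ++ post)) α β :=
    lseq_append.mpr ⟨u, hpre, lseq_append.mpr ⟨w', hlmid, hpost⟩⟩
  have hlen := hmin.2 _ (braidSeq_iff_lseq.mpr hnew)
  rw [heq] at hlen
  simp only [List.length_append, List.length_cons] at hlen
  omega

end AuxForward
theorem braid_seq_minimal_iff_nodup
    {B W : Type*} [Group W] (M : CoxeterMatrix B) (cs : CoxeterSystem M W)
    (hM : TypeLambda M) (α β : List B)
    (hα : cs.IsReduced α) (hβ : cs.IsReduced β)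
    (hequiv : BraidEquiv M α β) (hdim : 1 ≤ braidDim M α)
    (js : List ℕ) (hseq : BraidSeq M α js α β) :
    MinimalBraidSeq M α js α β ↔ js.Nodup := by
  constructor
  · intro hmin
    exact nodup_of_minimal cs hM.2 hα hmin
  · intro hnd
    exact minimal_of_nodup cs hα hseq hnd

end Braid
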